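/- For each t ∈ (-π, π) with t ≠ 0, the level set {(x,y) ∈ ℝ² ∖ {(±1,0)} : arg(1 - x² - y² + 2iy) = t}, together with the two points (±1,0), is a connected subset of ℝ²; for t = π, the set {(x,y) : y = 0, x² > 1} ∪ {(±1,0)} has exactly two connected components. -/

import Mathlib

/-- `θ̃(x,y) = arg(1 - x² - y² + 2iy)` with `arg` valued in `(-π, π]`. -/
noncomputable def pageArg (x y : ℝ) : ℝ :=
  Complex.arg (((1 - x ^ 2 - y ^ 2 : ℝ) : ℂ) + ((2 * y : ℝ) : ℂ) * Complex.I)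

open Real Set

lemma pageArg_of {t x y : ℝ} (ht0 : 0 < t) (htpi : t < π) (hy : 0 < y)
    (ha : (1 - x ^ 2 - y ^ 2) = 2 * (Real.cos t / Real.sin t) * y) : pageArg x y = t := by
  have hs : 0 < Real.sin t := Real.sin_pos_of_pos_of_lt_pi ht0 htpi
  have hsC : ((Real.sin t : ℝ) : ℂ) ≠ 0 := Complex.ofReal_ne_zero.mpr hs.ne'
  have key : (((1 - x ^ 2 - y ^ 2 : ℝ) : ℂ) + ((2 * y : ℝ) : ℂ) * Complex.I)
      = ((2 * y / Real.sin t : ℝ) : ℂ) *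
        (((Real.cos t : ℝ) : ℂ) + ((Real.sin t : ℝ) : ℂ) * Complex.I) := by
    have hsC' : Complex.sin ((t : ℝ) : ℂ) ≠ 0 := by
      rw [← Complex.ofReal_sin]; exact hsC
    rw [ha]
    push_cast
    field_simp
  unfold pageArg
  rw [key, Complex.arg_real_mul _ (by positivity), Complex.ofReal_cos, Complex.ofReal_sin,
    Complex.arg_cos_add_sin_mul_I ⟨by linarith [Real.pi_pos], htpi.le⟩]

lemma of_pageArg {t x y : ℝ} (ht0 : 0 < t) (htpi : t < π) (h : pageArg x y = t) :
    0 < y ∧ (1 - x ^ 2 - y ^ 2) = 2 * (Real.cos t / Real.sin t) * y := by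
  have hs : 0 < Real.sin t := Real.sin_pos_of_pos_of_lt_pi ht0 htpi
  set w : ℂ := ((1 - x ^ 2 - y ^ 2 : ℝ) : ℂ) + ((2 * y : ℝ) : ℂ) * Complex.I with hw
  have hw0 : w ≠ 0 := by
    intro h0
    rw [pageArg, ← hw, h0, Complex.arg_zero] at h
    exact ht0.ne h
  set r : ℝ := ‖w‖ with hr
  have habs : 0 < r := norm_pos_iff.mpr hw0
  have hrep := Complex.norm_mul_cos_add_sin_mul_I w
  have harg : Complex.arg w = t := h
  rw [harg, ← hr, ← Complex.ofReal_cos, ← Complex.ofReal_sin] at hrep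
  have h1 := congrArg Complex.re hrep
  have h2 := congrArg Complex.im hrep
  rw [hw] at h1 h2
  simp only [Complex.add_re, Complex.mul_re, Complex.mul_im, Complex.add_im, Complex.ofReal_re,
    Complex.ofReal_im, Complex.I_re, Complex.I_im, mul_zero, mul_one, zero_mul, sub_zero,
    zero_add, add_zero, neg_zero] at h1 h2
  have hy : 0 < y := by nlinarith
  refine ⟨hy, ?_⟩
  have hA : r = 2 * y / Real.sin t := by
    field_simp
    linarith
  rw [hA] at h1
  rw [← h1]
  field_simp

lemma key_pos {t : ℝ} (ht0 : 0 < t) (htpi : t < π) :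
    IsConnected
      ({p : ℝ × ℝ | p ∉ ({(1, 0), (-1, 0)} : Set (ℝ × ℝ)) ∧ pageArg p.1 p.2 = t} ∪
        {(1, 0), (-1, 0)}) := by
  have hs : 0 < Real.sin t := Real.sin_pos_of_pos_of_lt_pi ht0 htpi
  set c : ℝ := Real.cos t / Real.sin t with hc
  set R : ℝ := 1 / Real.sin t with hR
  have hR0 : 0 < R := by positivity
  set γ : ℝ → ℝ × ℝ := fun s => (R * Real.cos s, R * Real.sin s - c) with hγ
  have hγc : Continuous γ := by fun_prop
  set E : Set (ℝ × ℝ) := {(1, 0), (-1, 0)} with hE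
  set L : Set (ℝ × ℝ) := {p : ℝ × ℝ | p ∉ E ∧ pageArg p.1 p.2 = t} with hL
  have hRc : R ^ 2 = 1 + c ^ 2 := by
    rw [hR, hc]
    have := Real.sin_sq_add_cos_sq t
    field_simp
    linarith
  -- the level set is the image of the open arc
  have himg : L = γ '' Ioo (π / 2 - t) (π / 2 + t) := by
    ext ⟨x, y⟩
    constructor
    · rintro ⟨hpE, hp⟩
      obtain ⟨hy, ha⟩ := of_pageArg ht0 htpi hp
      -- circle equation
      have hcirc : x ^ 2 + (y + c) ^ 2 = R ^ 2 := by rw [hRc]; nlinarith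
      set z : ℂ := (x : ℝ) + ((y + c : ℝ) : ℂ) * Complex.I with hz
      have hz0 : z ≠ 0 := by
        intro h0
        have : (y + c : ℝ) = 0 := by
          have := congrArg Complex.im h0
          simpa [hz] using this
        have hx0 : x = 0 := by
          have := congrArg Complex.re h0
          simpa [hz] using this
        nlinarith
      have habsz : ‖z‖ = R := by
        have : ‖z‖ = Real.sqrt (x ^ 2 + (y + c) ^ 2) := by
          rw [hz, Complex.norm_def, Complex.normSq_add_mul_I]
        rw [this, hcirc, Real.sqrt_sq hR0.le]
      set s₀ : ℝ := Complex.arg z with hs₀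
      have hs₀mem : s₀ ∈ Set.Ioc (-π) π := Complex.arg_mem_Ioc z
      have hrepz := Complex.norm_mul_cos_add_sin_mul_I z
      rw [← hs₀, habsz, ← Complex.ofReal_cos, ← Complex.ofReal_sin] at hrepz
      have hx : x = R * Real.cos s₀ := by
        have := congrArg Complex.re hrepz
        simp only [hz, Complex.add_re, Complex.mul_re, Complex.add_im, Complex.mul_im,
          Complex.ofReal_re, Complex.ofReal_im, Complex.I_re, Complex.I_im, mul_zero, mul_one,
          zero_mul, sub_zero, zero_add, add_zero, neg_zero] at this
        linarith
      have hyc : y + c = R * Real.sin s₀ := by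
        have := congrArg Complex.im hrepz
        simp only [hz, Complex.add_re, Complex.mul_re, Complex.add_im, Complex.mul_im,
          Complex.ofReal_re, Complex.ofReal_im, Complex.I_re, Complex.I_im, mul_zero, mul_one,
          zero_mul, sub_zero, zero_add, add_zero, neg_zero] at this
        linarith
      have hsin : Real.cos t < Real.sin s₀ := by
        have h1 : R * Real.cos t = c := by rw [hR, hc]; field_simp
        have : R * Real.cos t < R * Real.sin s₀ := by rw [h1, ← hyc]; linarith
        exact lt_of_mul_lt_mul_left this hR0.le
      -- find the parameter in the interval
      have hmain : ∀ s : ℝ, Real.cos t < Real.sin s → π / 2 - π ≤ s → s ≤ π / 2 + π →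
          s ∈ Ioo (π / 2 - t) (π / 2 + t) := by
        intro s hss hlb hub
        constructor
        · by_contra hcon
          push_neg at hcon
          have h1 : t ≤ π / 2 - s := by linarith
          have h2 : π / 2 - s ≤ π := by linarith
          have := Real.cos_le_cos_of_nonneg_of_le_pi ht0.le h2 h1
          rw [Real.cos_pi_div_two_sub] at this
          linarith
        · by_contra hcon
          push_neg at hcon
          have h1 : t ≤ s - π / 2 := by linarith
          have h2 : s - π / 2 ≤ π := by linarith
          have := Real.cos_le_cos_of_nonneg_of_le_pi ht0.le h2 h1
          have h3 : Real.cos (s - π / 2) = Real.sin s := by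
            rw [← Real.cos_neg, neg_sub, Real.cos_pi_div_two_sub]
          rw [h3] at this
          linarith
      rcases le_or_gt (-(π / 2)) s₀ with hcase | hcase
      · refine ⟨s₀, hmain s₀ hsin (by linarith) (by linarith [hs₀mem.2]), ?_⟩
        rw [hγ]
        simp only [Prod.mk.injEq]
        exact ⟨hx.symm, by linarith⟩
      · refine ⟨s₀ + 2 * π, hmain _ (by rw [Real.sin_add_two_pi]; exact hsin)
          (by linarith [hs₀mem.1, Real.pi_pos]) (by linarith [hs₀mem.1]), ?_⟩
        rw [hγ]
        simp only [Real.cos_add_two_pi, Real.sin_add_two_pi, Prod.mk.injEq]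
        exact ⟨hx.symm, by linarith⟩
    · rintro ⟨s, hsmem, heq⟩
      rw [← heq]
      have hsin : Real.cos t < Real.sin s := by
        have h1 : |π / 2 - s| < t := by
          rw [abs_lt]
          constructor <;> [linarith [hsmem.2]; linarith [hsmem.1]]
        have h2 := Real.cos_lt_cos_of_nonneg_of_le_pi (abs_nonneg _) htpi.le h1
        calc Real.cos t < Real.cos |π / 2 - s| := h2
          _ = Real.cos (π / 2 - s) := by rw [Real.cos_abs]
          _ = Real.sin s := Real.cos_pi_div_two_sub s
      have hy : 0 < R * Real.sin s - c := by
        have h1 : R * Real.cos t = c := by rw [hR, hc]; field_simp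
        nlinarith
      have hpE : γ s ∉ E := by
        rw [hE, hγ]
        simp only [Set.mem_insert_iff, Set.mem_singleton_iff, Prod.mk.injEq, not_or]
        constructor <;> intro h <;> exact absurd h.2 (by linarith)
      refine ⟨hpE, ?_⟩
      show pageArg (R * Real.cos s) (R * Real.sin s - c) = t
      refine pageArg_of ht0 htpi hy ?_
      have hsq : (R * Real.cos s) ^ 2 + (R * Real.sin s - c) ^ 2
          = R ^ 2 - 2 * c * (R * Real.sin s) + c ^ 2 := by
        have := Real.sin_sq_add_cos_sq s
        nlinarith
      have hcc : 2 * (Real.cos t / Real.sin t) = 2 * c := by rw [hc]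
      rw [hcc]
      nlinarith
  -- L is connected
  have hLconn : IsConnected L := by
    rw [himg]
    exact (isConnected_Ioo (by linarith)).image γ hγc.continuousOn
  -- endpoints lie in the closure of L
  have hendpoints : E ⊆ closure L := by
    have hsub : γ '' Icc (π / 2 - t) (π / 2 + t) ⊆ closure L := by
      rw [himg, ← closure_Ioo (by linarith : π / 2 - t ≠ π / 2 + t)]
      exact (image_closure_subset_closure_image hγc)
    have h1 : (1, 0) ∈ γ '' Icc (π / 2 - t) (π / 2 + t) := by
      refine ⟨π / 2 - t, ⟨le_refl _, by linarith⟩, ?_⟩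
      rw [hγ]
      simp only [Real.cos_pi_div_two_sub, Real.sin_pi_div_two_sub, Prod.mk.injEq]
      constructor
      · rw [hR]; field_simp
      · rw [hR, hc]; field_simp; ring
    have h2 : (-1, 0) ∈ γ '' Icc (π / 2 - t) (π / 2 + t) := by
      refine ⟨π / 2 + t, ⟨by linarith, le_refl _⟩, ?_⟩
      rw [hγ]
      simp only [Real.cos_add, Real.sin_add, Real.cos_pi_div_two, Real.sin_pi_div_two,
        zero_mul, one_mul, zero_sub, add_zero, zero_add, Prod.mk.injEq]
      constructor
      · rw [hR]; field_simp
      · rw [hR, hc]; field_simp; ring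
    rw [hE]
    rintro p (rfl | rfl)
    · exact hsub h1
    · exact hsub (by simpa using h2)
  exact hLconn.subset_closure subset_union_left
    (union_subset subset_closure hendpoints)

lemma pageArg_neg_eq_iff {t x y : ℝ} (ht1 : -π < t) (ht2 : t < π) :
    pageArg x (-y) = t ↔ pageArg x y = -t := by
  have hconj : ((1 - x ^ 2 - (-y) ^ 2 : ℝ) : ℂ) + ((2 * (-y) : ℝ) : ℂ) * Complex.I
      = (starRingEnd ℂ) (((1 - x ^ 2 - y ^ 2 : ℝ) : ℂ) + ((2 * y : ℝ) : ℂ) * Complex.I) := by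
    simp only [map_add, map_mul, Complex.conj_ofReal, Complex.conj_I]
    push_cast
    ring
  unfold pageArg
  rw [hconj, Complex.arg_conj]
  split_ifs with h
  · constructor
    · intro h'; exact absurd h'.symm ht2.ne
    · intro h'
      rw [h] at h'
      exact absurd h'.symm (by linarith [Real.pi_pos])
  · constructor
    · intro h'; linarith
    · intro h'; linarith

lemma key_neg {t : ℝ} (ht0 : t < 0) (htpi : -π < t) :
    IsConnected
      ({p : ℝ × ℝ | p ∉ ({(1, 0), (-1, 0)} : Set (ℝ × ℝ)) ∧ pageArg p.1 p.2 = t} ∪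
        {(1, 0), (-1, 0)}) := by
  have hpos := key_pos (t := -t) (by linarith) (by linarith)
  set r : ℝ × ℝ → ℝ × ℝ := fun p => (p.1, -p.2) with hr
  have hrc : Continuous r := by fun_prop
  have himg : r '' ({p : ℝ × ℝ | p ∉ ({(1, 0), (-1, 0)} : Set (ℝ × ℝ)) ∧ pageArg p.1 p.2 = -t} ∪
      {(1, 0), (-1, 0)})
      = ({p : ℝ × ℝ | p ∉ ({(1, 0), (-1, 0)} : Set (ℝ × ℝ)) ∧ pageArg p.1 p.2 = t} ∪
        {(1, 0), (-1, 0)}) := by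
    ext ⟨x, y⟩
    have hEiff : ((x, -y) ∈ ({(1, 0), (-1, 0)} : Set (ℝ × ℝ)))
        ↔ ((x, y) ∈ ({(1, 0), (-1, 0)} : Set (ℝ × ℝ))) := by
      simp only [Set.mem_insert_iff, Set.mem_singleton_iff, Prod.mk.injEq, neg_eq_zero]
    constructor
    · rintro ⟨⟨u, v⟩, hq, heq⟩
      have hx : u = x ∧ -v = y := by
        simpa [hr, Prod.ext_iff] using heq
      obtain ⟨rfl, rfl⟩ := hx
      rcases hq with ⟨hqE, hqA⟩ | hqE
      · left
        refine ⟨?_, ?_⟩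
        · intro hmem; exact hqE (by simpa using (hEiff.symm.mp (by simpa using hmem)))
        · show pageArg u (-v) = t
          rw [pageArg_neg_eq_iff htpi (by linarith)]
          exact hqA
      · right
        rcases hqE with h | h <;> [left; right] <;>
          simp_all [Prod.ext_iff]
    · rintro (⟨hpE, hpA⟩ | hpE)
      · refine ⟨(x, -y), Or.inl ⟨?_, ?_⟩, ?_⟩
        · intro hmem; exact hpE (hEiff.mp hmem)
        · show pageArg x (-y) = -t
          rw [pageArg_neg_eq_iff (by linarith) (by linarith)]
          simpa using hpA
        · simp [hr]
      · refine ⟨(x, -y), Or.inr ?_, by simp [hr]⟩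
        rcases hpE with h | h <;> [left; right] <;>
          simp_all [Prod.ext_iff]
  rw [← himg]
  exact hpos.image r hrc.continuousOn

lemma two_components :
    let S : Set (ℝ × ℝ) := {p : ℝ × ℝ | p.2 = 0 ∧ 1 < p.1 ^ 2} ∪ {(1, 0), (-1, 0)}
    connectedComponentIn S (1, 0) = {p : ℝ × ℝ | p.2 = 0 ∧ 1 ≤ p.1} ∧
    connectedComponentIn S (-1, 0) = {p : ℝ × ℝ | p.2 = 0 ∧ p.1 ≤ -1} := by
  intro S
  set A : Set (ℝ × ℝ) := {p : ℝ × ℝ | p.2 = 0 ∧ 1 ≤ p.1} with hA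
  set B : Set (ℝ × ℝ) := {p : ℝ × ℝ | p.2 = 0 ∧ p.1 ≤ -1} with hB
  set U : Set (ℝ × ℝ) := {p : ℝ × ℝ | 0 < p.1} with hU
  set V : Set (ℝ × ℝ) := {p : ℝ × ℝ | p.1 < 0} with hV
  have hUopen : IsOpen U := isOpen_lt continuous_const continuous_fst
  have hVopen : IsOpen V := isOpen_lt continuous_fst continuous_const
  have hUV : Disjoint U V := by
    rw [Set.disjoint_left]
    rintro ⟨x, y⟩ hp hp'
    simp only [hU, hV, Set.mem_setOf_eq] at hp hp'
    linarith
  have hAS : A ⊆ S := by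
    rintro ⟨x, y⟩ ⟨hy, hx⟩
    rcases eq_or_lt_of_le hx with h | h
    · right; left; simp_all [Prod.ext_iff]
    · left; exact ⟨hy, by nlinarith⟩
  have hBS : B ⊆ S := by
    rintro ⟨x, y⟩ ⟨hy, hx⟩
    rcases eq_or_lt_of_le hx with h | h
    · right; right; simp_all [Prod.ext_iff]
    · left; exact ⟨hy, by nlinarith⟩
  have hSUV : S ⊆ U ∪ V := by
    rintro ⟨x, y⟩ (⟨-, hx⟩ | hx)
    · rcases lt_or_ge 0 x with h | h
      · exact Or.inl h
      · refine Or.inr ?_; show x < 0; nlinarith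
    · rcases hx with h | h <;> simp only [Set.mem_singleton_iff, Prod.mk.injEq] at h <;>
        obtain ⟨rfl, rfl⟩ := h
      · exact Or.inl (by norm_num [hU, Set.mem_setOf_eq])
      · exact Or.inr (by norm_num [hV, Set.mem_setOf_eq])
  have hSU : S ∩ U ⊆ A := by
    rintro ⟨x, y⟩ ⟨hS, hx⟩
    have hx' : (0 : ℝ) < x := hx
    rcases hS with ⟨hy, hsq⟩ | h
    · exact ⟨hy, by nlinarith⟩
    · rcases h with h | h <;> simp only [Set.mem_singleton_iff, Prod.mk.injEq] at h <;> obtain ⟨rfl, rfl⟩ := h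
      · exact ⟨rfl, le_refl _⟩
      · norm_num at hx'
  have hSV : S ∩ V ⊆ B := by
    rintro ⟨x, y⟩ ⟨hS, hx⟩
    have hx' : x < (0 : ℝ) := hx
    rcases hS with ⟨hy, hsq⟩ | h
    · exact ⟨hy, by nlinarith⟩
    · rcases h with h | h <;> simp only [Set.mem_singleton_iff, Prod.mk.injEq] at h <;> obtain ⟨rfl, rfl⟩ := h
      · norm_num at hx'
      · exact ⟨rfl, le_refl _⟩
  have hAconn : IsPreconnected A := by
    have : A = (fun x : ℝ => (x, (0 : ℝ))) '' Set.Ici 1 := by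
      ext ⟨x, y⟩
      simp only [hA, Set.mem_setOf_eq, Set.mem_image, Set.mem_Ici, Prod.mk.injEq]
      constructor
      · rintro ⟨rfl, hx⟩; exact ⟨x, hx, rfl, rfl⟩
      · rintro ⟨u, hu, rfl, rfl⟩; exact ⟨rfl, hu⟩
    rw [this]
    exact (isPreconnected_Ici).image _ (by fun_prop : Continuous fun x : ℝ => (x, (0:ℝ))).continuousOn
  have hBconn : IsPreconnected B := by
    have : B = (fun x : ℝ => (x, (0 : ℝ))) '' Set.Iic (-1) := by
      ext ⟨x, y⟩
      simp only [hB, Set.mem_setOf_eq, Set.mem_image, Set.mem_Iic, Prod.mk.injEq]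
      constructor
      · rintro ⟨rfl, hx⟩; exact ⟨x, hx, rfl, rfl⟩
      · rintro ⟨u, hu, rfl, rfl⟩; exact ⟨rfl, hu⟩
    rw [this]
    exact (isPreconnected_Iic).image _ (by fun_prop : Continuous fun x : ℝ => (x, (0:ℝ))).continuousOn
  have haA : ((1 : ℝ), (0 : ℝ)) ∈ A := ⟨rfl, le_refl _⟩
  have hbB : ((-1 : ℝ), (0 : ℝ)) ∈ B := ⟨rfl, le_refl _⟩
  constructor
  · apply Set.Subset.antisymm
    · have hsub : connectedComponentIn S (1, 0) ⊆ U := by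
        apply IsPreconnected.subset_left_of_subset_union hUopen hVopen hUV
          ((connectedComponentIn_subset S _).trans hSUV)
        · exact ⟨(1, 0), mem_connectedComponentIn (hAS haA), by norm_num [hU]⟩
        · exact isPreconnected_connectedComponentIn
      intro p hp
      exact hSU ⟨connectedComponentIn_subset S _ hp, hsub hp⟩
    · exact hAconn.subset_connectedComponentIn haA hAS
  · apply Set.Subset.antisymm
    · have hsub : connectedComponentIn S (-1, 0) ⊆ V := by
        apply IsPreconnected.subset_left_of_subset_union hVopen hUopen hUV.symm
          ((connectedComponentIn_subset S _).trans (hSUV.trans (Set.union_comm U V).subset))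
        · exact ⟨(-1, 0), mem_connectedComponentIn (hBS hbB), by norm_num [hV]⟩
        · exact isPreconnected_connectedComponentIn
      intro p hp
      exact hSV ⟨connectedComponentIn_subset S _ hp, hsub hp⟩
    · exact hBconn.subset_connectedComponentIn hbB hBS

/-- For `t ∈ (-π,π)`, `t ≠ 0`, the `t`-level of `θ̃` together with `(±1,0)` is
connected; the `π`-level `{y = 0, x² > 1}` together with `(±1,0)` has exactly two
connected components. -/
theorem pages_connectedness :
    (∀ t ∈ Set.Ioo (-Real.pi) Real.pi, t ≠ 0 →
      IsConnected
        ({p : ℝ × ℝ | p ∉ ({(1, 0), (-1, 0)} : Set (ℝ × ℝ)) ∧ pageArg p.1 p.2 = t} ∪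
          {(1, 0), (-1, 0)})) ∧
    (∃ a ∈ ({p : ℝ × ℝ | p.2 = 0 ∧ 1 < p.1 ^ 2} ∪ {(1, 0), (-1, 0)}),
      ∃ b ∈ ({p : ℝ × ℝ | p.2 = 0 ∧ 1 < p.1 ^ 2} ∪ {(1, 0), (-1, 0)}),
        connectedComponentIn
            ({p : ℝ × ℝ | p.2 = 0 ∧ 1 < p.1 ^ 2} ∪ {(1, 0), (-1, 0)}) a ≠
          connectedComponentIn
            ({p : ℝ × ℝ | p.2 = 0 ∧ 1 < p.1 ^ 2} ∪ {(1, 0), (-1, 0)}) b ∧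
        ∀ c ∈ ({p : ℝ × ℝ | p.2 = 0 ∧ 1 < p.1 ^ 2} ∪ {(1, 0), (-1, 0)}),
          connectedComponentIn
              ({p : ℝ × ℝ | p.2 = 0 ∧ 1 < p.1 ^ 2} ∪ {(1, 0), (-1, 0)}) c =
            connectedComponentIn
              ({p : ℝ × ℝ | p.2 = 0 ∧ 1 < p.1 ^ 2} ∪ {(1, 0), (-1, 0)}) a ∨
          connectedComponentIn
              ({p : ℝ × ℝ | p.2 = 0 ∧ 1 < p.1 ^ 2} ∪ {(1, 0), (-1, 0)}) c =
            connectedComponentIn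
              ({p : ℝ × ℝ | p.2 = 0 ∧ 1 < p.1 ^ 2} ∪ {(1, 0), (-1, 0)}) b) := by
  constructor
  · rintro t ⟨ht1, ht2⟩ hne
    rcases hne.lt_or_gt with h | h
    · exact key_neg h ht1
    · exact key_pos h ht2
  · obtain ⟨h1, h2⟩ := two_components
    set S : Set (ℝ × ℝ) := {p : ℝ × ℝ | p.2 = 0 ∧ 1 < p.1 ^ 2} ∪ {(1, 0), (-1, 0)} with hS
    have haS : ((1 : ℝ), (0 : ℝ)) ∈ S := Or.inr (Or.inl rfl)
    have hbS : ((-1 : ℝ), (0 : ℝ)) ∈ S := Or.inr (Or.inr rfl)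
    refine ⟨(1, 0), haS, (-1, 0), hbS, ?_, ?_⟩
    · rw [h1, h2]
      intro heq
      have : ((1 : ℝ), (0 : ℝ)) ∈ {p : ℝ × ℝ | p.2 = 0 ∧ p.1 ≤ -1} := by
        rw [← heq]; exact ⟨rfl, le_refl _⟩
      have := this.2
      norm_num at this
    · rintro ⟨x, y⟩ hc
      have hAB : ((x, y) ∈ {p : ℝ × ℝ | p.2 = 0 ∧ 1 ≤ p.1}) ∨
          ((x, y) ∈ {p : ℝ × ℝ | p.2 = 0 ∧ p.1 ≤ -1}) := by
        rcases hc with ⟨hy, hsq⟩ | h | h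
        · rcases lt_or_ge 0 x with hx | hx
          · exact Or.inl ⟨hy, by nlinarith⟩
          · exact Or.inr ⟨hy, by nlinarith⟩
        · simp only [Set.mem_singleton_iff, Prod.mk.injEq] at h
          obtain ⟨rfl, rfl⟩ := h
          exact Or.inl ⟨rfl, le_refl _⟩
        · simp only [Set.mem_singleton_iff, Prod.mk.injEq] at h
          obtain ⟨rfl, rfl⟩ := h
          exact Or.inr ⟨rfl, le_refl _⟩
      rcases hAB with h | h
      · left
        exact (connectedComponentIn_eq (by rw [h1]; exact h)).symm
      · right
        exact (connectedComponentIn_eq (by rw [h2]; exact h)).symm
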